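/- For every integer s ≥ 1 and all n ≥ 1, k ≥ 0, a multiset P of positive integer block sizes, and m ≥ 0, F(n,k,P,m) = Σ_{i=0}^{s} (-1)^i · C(s,i) · F(n, k+s, P, m+s-i). -/

import Mathlib

/-- The ground set: `n` main blocks, the `i`-th of size `p i`, plus an
additional block of size `m`. -/
abbrev InsetGround (n : ℕ) (p : Fin n → ℕ) (m : ℕ) : Type :=
  (Σ i : Fin n, Fin (p i)) ⊕ Fin m

/-- `F n p m k` is the number of `(n+k)`-subsets of the ground set that
intersect every main block (the "(n+k)-insets"). -/
def F (n : ℕ) (p : Fin n → ℕ) (m k : ℕ) : ℕ :=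
  ((Finset.univ : Finset (Finset (InsetGround n p m))).filter
    (fun U => U.card = n + k ∧
      ∀ i : Fin n, ∃ x : Σ j : Fin n, Fin (p j), x.1 = i ∧ Sum.inl x ∈ U)).card

variable {n : ℕ} {p : Fin n → ℕ} {m : ℕ}

def ι (n : ℕ) (p : Fin n → ℕ) (m : ℕ) :
    InsetGround n p m ↪ InsetGround n p (m + 1) :=
  ⟨Sum.map id Fin.castSucc,
   Sum.map_injective.mpr ⟨Function.injective_id, Fin.castSucc_injective m⟩⟩

lemma iota_ne (x : InsetGround n p m) :
    ι n p m x ≠ Sum.inr (Fin.last m) := by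
  cases x with
  | inl a => simp [ι]
  | inr b => simp [ι, Fin.castSucc_lt_last b |>.ne]

lemma mem_range_iota {y : InsetGround n p (m + 1)}
    (hy : y ≠ Sum.inr (Fin.last m)) : ∃ x, ι n p m x = y := by
  cases y with
  | inl a => exact ⟨Sum.inl a, rfl⟩
  | inr b =>
    have hb : b ≠ Fin.last m := fun h => hy (by rw [h])
    exact ⟨Sum.inr (b.castPred hb), by simp [ι]⟩

lemma map_preimage_eq {V : Finset (InsetGround n p (m + 1))}
    (hV : Sum.inr (Fin.last m) ∉ V) :
    (V.preimage (ι n p m) (ι n p m).injective.injOn).map (ι n p m) = V := by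
  ext y
  simp only [Finset.mem_map, Finset.mem_preimage]
  constructor
  · rintro ⟨x, hx, rfl⟩; exact hx
  · intro hyV
    have hy : y ≠ Sum.inr (Fin.last m) := fun h => hV (h ▸ hyV)
    obtain ⟨x, hx⟩ := mem_range_iota hy
    exact ⟨x, hx ▸ hyV, hx⟩

lemma inl_mem_map {U : Finset (InsetGround n p m)} {x : Σ j : Fin n, Fin (p j)} :
    Sum.inl x ∈ U.map (ι n p m) ↔ Sum.inl x ∈ U := by
  constructor
  · rintro h
    rw [Finset.mem_map] at h
    obtain ⟨a, ha, hax⟩ := h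
    cases a with
    | inl a' => cases hax; exact ha
    | inr b => simp [ι] at hax
  · intro h
    exact Finset.mem_map.mpr ⟨Sum.inl x, h, rfl⟩

lemma e_not_mem_map {U : Finset (InsetGround n p m)} :
    Sum.inr (Fin.last m) ∉ U.map (ι n p m) := by
  intro hmem
  obtain ⟨x, _, hx⟩ := Finset.mem_map.mp hmem
  exact iota_ne x hx

lemma Frec (n : ℕ) (p : Fin n → ℕ) (m k : ℕ) :
    F n p (m + 1) (k + 1) = F n p m (k + 1) + F n p m k := by
  classical
  set e : InsetGround n p (m + 1) := Sum.inr (Fin.last m) with he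
  unfold F
  set P : Finset (InsetGround n p (m+1)) → Prop := fun U => U.card = n + (k+1) ∧
      ∀ i : Fin n, ∃ x : Σ j : Fin n, Fin (p j), x.1 = i ∧ Sum.inl x ∈ U with hP
  rw [← Finset.card_filter_add_card_filter_not (p := fun U => e ∈ U)]
  have h1 : ((Finset.univ.filter P).filter (fun U => ¬ e ∈ U)).card =
      ((Finset.univ : Finset (Finset (InsetGround n p m))).filter
        (fun U => U.card = n + (k+1) ∧
          ∀ i : Fin n, ∃ x : Σ j : Fin n, Fin (p j), x.1 = i ∧ Sum.inl x ∈ U)).card := by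
    refine Finset.card_bij' (fun V _ => V.preimage (ι n p m) (ι n p m).injective.injOn)
      (fun U _ => U.map (ι n p m)) ?_ ?_ ?_ ?_
    · intro V hV
      simp only [Finset.mem_filter, Finset.mem_univ, true_and, hP] at hV ⊢
      obtain ⟨⟨hcard, hins⟩, heV⟩ := hV
      have hmp := map_preimage_eq (n := n) (p := p) (V := V) heV
      have hc2 : (V.preimage (ι n p m) (ι n p m).injective.injOn).card = V.card := by
        conv_rhs => rw [← hmp]
        rw [Finset.card_map]
      constructor
      · rw [hc2, hcard]
      · intro i
        obtain ⟨x, hxi, hxV⟩ := hins i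
        refine ⟨x, hxi, ?_⟩
        rw [← hmp] at hxV
        exact inl_mem_map.mp hxV
    · intro U hU
      simp only [Finset.mem_filter, Finset.mem_univ, true_and, hP] at hU ⊢
      obtain ⟨hcard, hins⟩ := hU
      refine ⟨⟨by rw [Finset.card_map, hcard], fun i => ?_⟩, e_not_mem_map⟩
      obtain ⟨x, hxi, hxU⟩ := hins i
      exact ⟨x, hxi, inl_mem_map.mpr hxU⟩
    · intro V hV
      simp only [Finset.mem_filter] at hV
      exact map_preimage_eq hV.2
    · intro U hU
      ext x
      simp [Finset.mem_preimage]
  have h2 : ((Finset.univ.filter P).filter (fun U => e ∈ U)).card =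
      ((Finset.univ : Finset (Finset (InsetGround n p m))).filter
        (fun U => U.card = n + k ∧
          ∀ i : Fin n, ∃ x : Σ j : Fin n, Fin (p j), x.1 = i ∧ Sum.inl x ∈ U)).card := by
    refine Finset.card_bij' (fun V _ => (V.erase e).preimage (ι n p m) (ι n p m).injective.injOn)
      (fun U _ => insert e (U.map (ι n p m))) ?_ ?_ ?_ ?_
    · intro V hV
      simp only [Finset.mem_filter, Finset.mem_univ, true_and, hP] at hV ⊢
      obtain ⟨⟨hcard, hins⟩, heV⟩ := hV
      have hmp := map_preimage_eq (n := n) (p := p) (V := V.erase e) (Finset.notMem_erase e V)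
      have hce : (V.erase e).card = n + k := by
        rw [Finset.card_erase_of_mem heV, hcard]; omega
      have hc2 : ((V.erase e).preimage (ι n p m) (ι n p m).injective.injOn).card
          = (V.erase e).card := by
        conv_rhs => rw [← hmp]
        rw [Finset.card_map]
      constructor
      · rw [hc2, hce]
      · intro i
        obtain ⟨x, hxi, hxV⟩ := hins i
        refine ⟨x, hxi, ?_⟩
        have hme : Sum.inl x ∈ V.erase e := Finset.mem_erase.mpr ⟨by simp [he], hxV⟩
        rw [← hmp] at hme
        exact inl_mem_map.mp hme
    · intro U hU
      simp only [Finset.mem_filter, Finset.mem_univ, true_and, hP] at hU ⊢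
      obtain ⟨hcard, hins⟩ := hU
      refine ⟨⟨by rw [Finset.card_insert_of_notMem e_not_mem_map, Finset.card_map, hcard]; omega, fun i => ?_⟩,
        Finset.mem_insert_self e _⟩
      obtain ⟨x, hxi, hxU⟩ := hins i
      exact ⟨x, hxi, Finset.mem_insert_of_mem (inl_mem_map.mpr hxU)⟩
    · intro V hV
      simp only [Finset.mem_filter] at hV
      rw [map_preimage_eq (Finset.notMem_erase e V)]
      exact Finset.insert_erase hV.2
    · intro U hU
      rw [Finset.erase_insert e_not_mem_map]
      ext x
      simp [Finset.mem_preimage]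
  rw [h1, h2, Nat.add_comm]

open fwdDiff in
lemma key1 (n : ℕ) (p : Fin n → ℕ) : ∀ s k m : ℕ,
    (F n p m k : ℤ) = (fwdDiff 1)^[s] (fun t => (F n p t (k + s) : ℤ)) m := by
  intro s
  induction s with
  | zero => intro k m; simp
  | succ s ih =>
    intro k m
    have hfun : (fun t => (F n p t (k + s) : ℤ))
        = (fwdDiff 1) (fun t => (F n p t (k + s + 1) : ℤ)) := by
      funext t
      have := Frec n p t (k + s)
      simp only [fwdDiff]
      push_cast [this]
      ring
    rw [ih k m, hfun, ← Function.iterate_succ_apply]; rfl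


open fwdDiff in
theorem stmt_8 (s : ℕ) (hs : 1 ≤ s) (n : ℕ) (hn : 1 ≤ n) (k m : ℕ)
    (p : Fin n → ℕ) (hp : ∀ i, 1 ≤ p i) :
    (F n p m k : ℤ) =
      ∑ i ∈ Finset.range (s + 1), (-1 : ℤ) ^ i * (s.choose i : ℤ) *
        (F n p (m + s - i) (k + s) : ℤ) := by
  rw [key1 n p s k m, fwdDiff_iter_eq_sum_shift]
  rw [← Finset.sum_range_reflect]
  refine Finset.sum_congr rfl fun j hj => ?_
  have hjs : j ≤ s := by
    simp only [Finset.mem_range] at hj; omega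
  have h1 : s + 1 - 1 - j = s - j := by omega
  have h2 : s - (s - j) = j := by omega
  have h3 : m + (s - j) • 1 = m + s - j := by
    simp only [smul_eq_mul, mul_one]; omega
  rw [h1, h3, h2, Nat.choose_symm hjs]
  simp only [zsmul_eq_mul]
  push_cast
  ring
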